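/- Let n ≥ 3 be an integer, x ≥ 0 a real number, and a_0(n), a_1(n) real sequences. Then the first central moment satisfies V_{n,1}((t−x); x) = (1/(n−2))·(1+2x)(3a_0(n) − 2a_1(n)), where the operator is applied to the function t ↦ t − x. -/

import Mathlib

open MeasureTheory Filter Topology
open Set

/-- Baskakov basis function `p_{n,k}(x) = C(n+k-1, k) x^k / (1+x)^{n+k}`. -/
noncomputable def bask (n k : ℕ) (x : ℝ) : ℝ :=
  (Nat.choose (n + k - 1) k : ℝ) * x ^ k / (1 + x) ^ (n + k)

/-- Modified basis `p^1_{n,k}(x) = a(x,n) p_{n+1,k}(x) + b(x,n) p_{n+1,k-1}(x)`,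
with `p_{n+1,-1} = 0`. -/
noncomputable def p1 (a0 a1 : ℕ → ℝ) (n k : ℕ) (x : ℝ) : ℝ :=
  (a0 n + a1 n * x) * bask (n + 1) k x
    + (a0 n - a1 n * (1 + x)) * (if k = 0 then 0 else bask (n + 1) (k - 1) x)

/-- First-order modified Baskakov–Durrmeyer operator. -/
noncomputable def V1 (a0 a1 : ℕ → ℝ) (n : ℕ) (f : ℝ → ℝ) (x : ℝ) : ℝ :=
  ((n : ℝ) - 1) * ∑' k : ℕ, p1 a0 a1 n k x * ∫ t in Set.Ioi (0 : ℝ), bask n k t * f t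


lemma base_int (m : ℕ) :
    IntegrableOn (fun t : ℝ => ((1+t)^(m+2))⁻¹) (Ioi 0) ∧
      ∫ t in Ioi (0:ℝ), ((1+t)^(m+2))⁻¹ = 1/((m:ℝ)+1) := by
  set g : ℝ → ℝ := fun t => -((((m:ℝ)+1) * (1+t)^(m+1))⁻¹) with hg
  have hderiv : ∀ t ∈ Ici (0:ℝ), HasDerivAt g (((1+t)^(m+2))⁻¹) t := by
    intro t ht
    have h1t : (0:ℝ) < 1 + t := by simp at ht; linarith
    have h1 : HasDerivAt (fun t : ℝ => ((m:ℝ)+1) * (1+t)^(m+1))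
        (((m:ℝ)+1) * (((m:ℝ)+1) * (1+t)^m * 1)) t := by
      exact (((hasDerivAt_id' t).const_add 1).pow (m+1)).const_mul _ |>.congr_deriv (by push_cast; ring)
    have h2 := h1.inv (by positivity)
    have := h2.neg
    convert this using 1
    · rfl
    · rfl
    · rfl
    field_simp
    ring
  have hpos : ∀ t ∈ Ioi (0:ℝ), 0 ≤ ((1+t)^(m+2))⁻¹ := by
    intro t ht; simp at ht; positivity
  have htend : Tendsto g atTop (𝓝 0) := by
    rw [hg]
    rw [show (0:ℝ) = -0 by ring]
    apply Tendsto.neg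
    apply Tendsto.inv_tendsto_atTop
    apply Tendsto.const_mul_atTop (by positivity)
    exact (tendsto_pow_atTop (by omega)).comp (tendsto_atTop_add_const_left _ 1 tendsto_id)
  refine ⟨integrableOn_Ioi_deriv_of_nonneg' hderiv hpos htend, ?_⟩
  rw [integral_Ioi_of_hasDerivAt_of_nonneg' hderiv hpos htend]
  simp [hg]

lemma integrableOn_pow_div (k m : ℕ) :
    IntegrableOn (fun t : ℝ => t^k / (1+t)^(k+m+2)) (Ioi 0) := by
  apply Integrable.mono' (base_int m).1
  · apply ContinuousOn.aestronglyMeasurable _ measurableSet_Ioi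
    apply ContinuousOn.div (by fun_prop) (by fun_prop)
    intro t ht; simp at ht; positivity
  · filter_upwards [ae_restrict_mem measurableSet_Ioi] with t ht
    simp only [mem_Ioi] at ht
    rw [Real.norm_eq_abs, abs_of_nonneg (by positivity), ← one_div,
      div_le_div_iff₀ (by positivity) (by positivity), one_mul]
    calc t^k * (1+t)^(m+2) ≤ (1+t)^k * (1+t)^(m+2) :=
          mul_le_mul_of_nonneg_right (pow_le_pow_left₀ (by linarith) (by linarith) k) (by positivity)
      _ = (1+t)^(k+m+2) := by rw [← pow_add]; ring_nf

lemma integral_pow_div (k m : ℕ) :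
    ∫ t in Ioi (0:ℝ), t^k / (1+t)^(k+m+2)
      = (k.factorial * m.factorial : ℝ) / (k+m+1).factorial := by
  induction k with
  | zero =>
    simp only [pow_zero, Nat.zero_add, Nat.factorial_zero, Nat.cast_one, one_mul, one_div]
    rw [(base_int m).2, Nat.factorial_succ]
    have hm : (m.factorial : ℝ) ≠ 0 := by positivity
    push_cast
    field_simp
  | succ k ih =>
    set c : ℕ := k + m + 2 with hc
    set F : ℝ → ℝ := fun t => -(t^(k+1) * (((c:ℝ)) * (1+t)^c)⁻¹) with hF
    set f' : ℝ → ℝ := fun t =>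
      t^(k+1)/(1+t)^(k+m+3) - (((k:ℝ)+1)/(c:ℝ)) * (t^k/(1+t)^(k+m+2)) with hf'
    have hcpos : (0:ℝ) < (c:ℝ) := by positivity
    have hderiv : ∀ t ∈ Ici (0:ℝ), HasDerivAt F (f' t) t := by
      intro t ht
      have h1t : (0:ℝ) < 1 + t := by simp at ht; linarith
      have hu : HasDerivAt (fun t : ℝ => t^(k+1)) (((k:ℝ)+1)*t^k) t := by
        simpa using hasDerivAt_pow (k+1) t
      have hv : HasDerivAt (fun t : ℝ => ((c:ℝ)) * (1+t)^c)
          (((c:ℝ)) * ((c:ℝ) * (1+t)^(k+m+1))) t := by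
        have := (((hasDerivAt_id' t).const_add 1).pow c).const_mul ((c:ℝ))
        convert this using 1
        · rfl
        · rfl
        · rfl
        simp only [hc, Nat.add_sub_cancel]
        push_cast
        ring
      have := (hu.mul (hv.inv (by positivity))).neg
      convert this using 1
      · rfl
      · rfl
      · rfl
      rw [hf', hc]
      push_cast [Pi.inv_apply]
      have h2 : ((k:ℝ)+m+2) ≠ 0 := by positivity
      field_simp
      ring
    have hint : IntegrableOn f' (Ioi 0) := by
      apply Integrable.sub
      · have := integrableOn_pow_div (k+1) m
        rw [show k+1+m+2 = k+m+3 by omega] at this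
        exact this
      · exact (integrableOn_pow_div k m).const_mul _
    have htend : Tendsto F atTop (𝓝 0) := by
      rw [show (0:ℝ) = -0 by ring]
      apply Tendsto.neg
      apply squeeze_zero' (g := fun t : ℝ => ((1+t)^(m+1))⁻¹)
      · filter_upwards [eventually_ge_atTop (0:ℝ)] with t ht
        positivity
      · filter_upwards [eventually_ge_atTop (0:ℝ)] with t ht
        have h1t : (0:ℝ) < 1 + t := by linarith
        rw [inv_eq_one_div, inv_eq_one_div, mul_one_div,
          div_le_div_iff₀ (by positivity) (by positivity)]
        calc t^(k+1) * (1+t)^(m+1) ≤ (1+t)^(k+1) * (1+t)^(m+1) :=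
              mul_le_mul_of_nonneg_right (pow_le_pow_left₀ (by linarith) (by linarith) _)
                (by positivity)
          _ = (1+t)^c := by rw [← pow_add]; congr 1; omega
          _ ≤ (c:ℝ) * (1+t)^c := by
              nlinarith [pow_pos h1t c, (show (1:ℝ) ≤ (c:ℝ) by exact_mod_cast Nat.one_le_iff_ne_zero.2 (by omega))]
          _ = 1 * ((c:ℝ) * (1+t)^c) := by ring
      · apply Tendsto.inv_tendsto_atTop
        exact (tendsto_pow_atTop (by omega)).comp (tendsto_atTop_add_const_left _ 1 tendsto_id)
    have key := integral_Ioi_of_hasDerivAt_of_tendsto' hderiv hint htend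
    have hF0 : F 0 = 0 := by simp [hF]
    rw [hF0, sub_zero] at key
    have hsplit : ∫ t in Ioi (0:ℝ), f' t
        = (∫ t in Ioi (0:ℝ), t^(k+1)/(1+t)^(k+m+3))
          - (((k:ℝ)+1)/(c:ℝ)) * ∫ t in Ioi (0:ℝ), t^k/(1+t)^(k+m+2) := by
      rw [hf']
      rw [integral_sub ?_ ((integrableOn_pow_div k m).const_mul _), integral_const_mul]
      · have := integrableOn_pow_div (k+1) m
        rw [show k+1+m+2 = k+m+3 by omega] at this
        exact this
    rw [key, ih] at hsplit
    rw [show k+1+m+2 = k+m+3 by omega]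
    have e1 : ((k+1+m+1).factorial : ℝ) = ((k:ℝ)+m+2) * (k+m+1).factorial := by
      rw [show k+1+m+1 = (k+m+1)+1 by omega, Nat.factorial_succ]
      push_cast; ring
    have e2 : (((k+1).factorial : ℕ) : ℝ) = ((k:ℝ)+1) * (k.factorial) := by
      rw [Nat.factorial_succ]; push_cast; ring
    have hc' : ((c:ℕ):ℝ) = (k:ℝ)+m+2 := by rw [hc]; push_cast; ring
    have hfac : ((k+m+1).factorial : ℝ) ≠ 0 := by positivity
    rw [e1, e2]
    rw [hc'] at hsplit
    have h2 : ((k:ℝ)+m+2) ≠ 0 := by positivity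
    field_simp at hsplit ⊢
    linarith [hsplit]

lemma hasSum_bask (N : ℕ) {x : ℝ} (hx : 0 ≤ x) :
    HasSum (fun k => bask (N+1) k x) 1 := by
  have h1x : (0:ℝ) < 1 + x := by linarith
  set r : ℝ := x / (1+x) with hrdef
  have hr : ‖r‖ < 1 := by
    rw [Real.norm_eq_abs, abs_of_nonneg (by positivity)]
    rw [div_lt_one h1x]; linarith
  have h := hasSum_choose_mul_geometric_of_norm_lt_one (𝕜 := ℝ) N hr
  have h2 := h.div_const ((1+x)^(N+1))
  have hfun : (fun k : ℕ => ((k+N).choose N : ℝ) * r ^ k / (1+x)^(N+1))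
      = fun k : ℕ => bask (N+1) k x := by
    funext k
    rw [bask, show N+1+k-1 = k+N by omega, Nat.choose_symm_add, hrdef, div_pow,
      show N+1+k = (N+1)+k from rfl, pow_add]
    have hne : (1+x) ≠ 0 := by positivity
    field_simp
    ring
  rw [hfun] at h2
  convert h2 using 1
  · rfl
  have hr1 : 1 - r = (1+x)⁻¹ := by rw [hrdef]; field_simp; ring
  rw [hr1, inv_pow]
  field_simp

lemma hasSum_k_bask (N : ℕ) {x : ℝ} (hx : 0 ≤ x) :
    HasSum (fun k : ℕ => (k:ℝ) * bask (N+1) k x) (((N:ℝ)+1) * x) := by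
  have h1x : (0:ℝ) < 1 + x := by linarith
  have base := hasSum_bask (N+1) hx
  have h2 := base.mul_left (((N:ℝ)+1) * x)
  have hfun : (fun j : ℕ => (((N:ℝ)+1) * x) * bask (N+2) j x)
      = fun j : ℕ => ((j:ℝ)+1) * bask (N+1) (j+1) x := by
    funext j
    have hnat : (j+N+1).choose (j+1) * (j+1) = (j+N+1).choose j * (N+1) := by
      rw [Nat.choose_succ_right_eq]; congr 1; omega
    rw [bask, bask, show N+2+j-1 = j+N+1 by omega, show N+1+(j+1)-1 = j+N+1 by omega,
      show N+2+j = N+1+(j+1) by omega]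
    have hcast : ((j+N+1).choose (j+1) : ℝ) * ((j:ℝ)+1)
        = ((j+N+1).choose j : ℝ) * ((N:ℝ)+1) := by exact_mod_cast hnat
    rw [pow_succ x j, ← mul_div_assoc, ← mul_div_assoc]
    congr 1
    linear_combination (-(x^j*x)) * hcast
  rw [hfun] at h2
  have h3 := (hasSum_nat_add_iff (f := fun k : ℕ => (k:ℝ) * bask (N+1) k x) 1).1
    (by convert h2 using 1; rfl; funext j; push_cast; ring)
  simpa using h3

lemma integral_bask (N k : ℕ) (x : ℝ) :
    ∫ t in Set.Ioi (0:ℝ), bask (N+3) k t * (t - x)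
      = ((k:ℝ)+1)/(((N:ℝ)+1)*((N:ℝ)+2)) - x * (1/((N:ℝ)+2)) := by
  have hfun : (fun t : ℝ => bask (N+3) k t * (t - x))
      = fun t : ℝ => ((k+N+2).choose k : ℝ) * (t^(k+1)/(1+t)^(k+N+3))
          - x * (((k+N+2).choose k : ℝ) * (t^k/(1+t)^(k+N+3))) := by
    funext t
    rw [bask, show N+3+k-1 = k+N+2 by omega, show N+3+k = k+N+3 by omega]
    ring
  have int1 : IntegrableOn (fun t : ℝ => t^(k+1)/(1+t)^(k+N+3)) (Ioi 0) := by
    have := integrableOn_pow_div (k+1) N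
    rwa [show k+1+N+2 = k+N+3 by omega] at this
  have int2 : IntegrableOn (fun t : ℝ => t^k/(1+t)^(k+N+3)) (Ioi 0) := by
    have := integrableOn_pow_div k (N+1)
    rwa [show k+(N+1)+2 = k+N+3 by omega] at this
  rw [hfun, integral_sub (int1.const_mul _) ((int2.const_mul _).const_mul x),
    integral_const_mul, integral_const_mul, integral_const_mul]
  have J1 : ∫ t in Ioi (0:ℝ), t^(k+1)/(1+t)^(k+N+3)
      = (((k+1).factorial : ℝ) * N.factorial)/(k+N+2).factorial := by
    have := integral_pow_div (k+1) N
    rwa [show k+1+N+2 = k+N+3 by omega, show k+1+N+1 = k+N+2 by omega] at this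
  have J2 : ∫ t in Ioi (0:ℝ), t^k/(1+t)^(k+N+3)
      = ((k.factorial : ℝ) * (N+1).factorial)/(k+N+2).factorial := by
    have := integral_pow_div k (N+1)
    rwa [show k+(N+1)+2 = k+N+3 by omega, show k+(N+1)+1 = k+N+2 by omega] at this
  rw [J1, J2]
  have hCn := Nat.choose_mul_factorial_mul_factorial (show k ≤ k+N+2 by omega)
  rw [show k+N+2-k = N+2 by omega] at hCn
  have hC : ((k+N+2).choose k : ℝ) * k.factorial * (N+2).factorial
      = ((k+N+2).factorial : ℝ) := by exact_mod_cast hCn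
  have e1 : (((k+1).factorial : ℕ) : ℝ) = ((k:ℝ)+1) * k.factorial := by
    rw [Nat.factorial_succ]; push_cast; ring
  have e2 : (((N+1).factorial : ℕ) : ℝ) = ((N:ℝ)+1) * N.factorial := by
    rw [Nat.factorial_succ]; push_cast; ring
  have e3 : (((N+2).factorial : ℕ) : ℝ) = ((N:ℝ)+2)*((N:ℝ)+1) * N.factorial := by
    rw [show N+2 = (N+1)+1 from rfl, Nat.factorial_succ, Nat.factorial_succ]; push_cast; ring
  rw [e3] at hC
  have hCv : ((k+N+2).choose k : ℝ)
      = ((k+N+2).factorial : ℝ) / ((k.factorial : ℝ) * (((N:ℝ)+2)*((N:ℝ)+1) * N.factorial)) := by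
    rw [eq_div_iff (by positivity)]
    linear_combination hC
  rw [hCv, e1, e2]
  have hK : (k.factorial : ℝ) ≠ 0 := by positivity
  have hNf : (N.factorial : ℝ) ≠ 0 := by positivity
  have hP : ((k+N+2).factorial : ℝ) ≠ 0 := by positivity
  have hN1 : ((N:ℝ)+1) ≠ 0 := by positivity
  have hN2 : ((N:ℝ)+2) ≠ 0 := by positivity
  field_simp

theorem V1_central_moment_one (n : ℕ) (hn : 3 ≤ n) (x : ℝ) (hx : 0 ≤ x) (a0 a1 : ℕ → ℝ) :
    V1 a0 a1 n (fun t => t - x) x =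
      (1 / ((n : ℝ) - 2)) * ((1 + 2 * x) * (3 * a0 n - 2 * a1 n)) := by
  obtain ⟨N, rfl⟩ : ∃ N, n = N + 3 := ⟨n - 3, by omega⟩
  have h1 := hasSum_bask (N+3) hx
  have h2 := hasSum_k_bask (N+3) hx
  set α : ℝ := 1/(((N:ℝ)+1)*((N:ℝ)+2)) with hα
  set β : ℝ := -(x * (1/((N:ℝ)+2))) with hβ
  set A : ℝ := a0 (N+3) + a1 (N+3) * x with hA
  set B : ℝ := a0 (N+3) - a1 (N+3) * (1+x) with hB
  -- S1
  have S1 : HasSum (fun k : ℕ => bask (N+3+1) k x * (α*((k:ℝ)+1)+β))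
      (α*(((↑(N+3):ℝ)+1)*x) + (α+β)) := by
    have h := (h2.mul_left α).add (h1.mul_left (α+β))
    convert h using 1
    · rfl
    · funext k; push_cast; ring
    · push_cast; ring
  -- shifted sum
  set H : ℕ → ℝ := fun k =>
    (if k = 0 then 0 else bask (N+3+1) (k-1) x) * (α*((k:ℝ)+1)+β) with hH
  have S2 : HasSum H (α*(((↑(N+3):ℝ)+1)*x) + (2*α+β)) := by
    have h := (h2.mul_left α).add (h1.mul_left (2*α+β))
    have hsh : HasSum (fun j : ℕ => H (j+1)) (α*(((↑(N+3):ℝ)+1)*x) + (2*α+β)) := by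
      convert h using 1
      · rfl
      · funext j
        simp only [hH, Nat.succ_ne_zero, if_false, Nat.add_sub_cancel]
        push_cast; ring
      · push_cast; ring
    have := (hasSum_nat_add_iff (f := H) 1).1 hsh
    simpa [hH] using this
  have total := (S1.mul_left A).add (S2.mul_left B)
  have hts : ∑' k : ℕ, p1 a0 a1 (N+3) k x
      * (∫ t in Set.Ioi (0:ℝ), bask (N+3) k t * ((fun t => t - x) t))
      = A*(α*(((↑(N+3):ℝ)+1)*x) + (α+β)) + B*(α*(((↑(N+3):ℝ)+1)*x) + (2*α+β)) := by
    rw [← total.tsum_eq]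
    apply tsum_congr
    intro k
    have hi : (∫ t in Set.Ioi (0:ℝ), bask (N+3) k t * ((fun t => t - x) t))
        = α*((k:ℝ)+1)+β := by
      simp only
      rw [integral_bask, hα, hβ]
      ring
    rw [hi, p1, hH]
    ring
  rw [V1, hts]
  have hN1 : ((N:ℝ)+1) ≠ 0 := by positivity
  have hN2 : ((N:ℝ)+2) ≠ 0 := by positivity
  have hN1' : (1:ℝ) + (N:ℝ) ≠ 0 := by positivity
  have hN2' : (2:ℝ) + (N:ℝ) ≠ 0 := by positivity
  rw [hα, hβ, hA, hB]
  have e : ((N+3:ℕ):ℝ) = (N:ℝ)+3 := by push_cast; ring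
  rw [e, show ((N:ℝ)+3-1) = (N:ℝ)+2 from by ring, show ((N:ℝ)+3-2) = (N:ℝ)+1 from by ring,
    one_div ((N:ℝ)+1), inv_mul_eq_div, eq_div_iff hN1]
  field_simp
  ring
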